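/- Let x̄ be a weak local Pareto minimizer of problem (VP) and let d be a nonzero critical direction at x̄. Suppose Conditions (C) are satisfied and the second-order Zangwill constraint qualification cl(A(x̄,d)) = B(x̄,d) holds (and that f_j''(x̄,d), j = 1,…,n, and g_i''(x̄,d), i ∈ I(x̄), exist). Then the system with unknowns u ∈ ℝ^s and v ∈ ℝ: ∇f_j(x̄)u + v f_j''(x̄,d) < 0 for all j = 1,…,n, ∇g_i(x̄)u + v g_i''(x̄,d) ≤ 0 for all i ∈ I(x̄), v > 0, has no solution. -/

import Mathlib

open Set Filter Topology Asymptotics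

noncomputable section

/-- The second-order directional derivative of `h` at `x` in direction `u` equals `D`. -/
def HasDirDeriv2 {s : ℕ} (h : (Fin s → ℝ) → ℝ) (x u : Fin s → ℝ) (D : ℝ) : Prop :=
  Filter.Tendsto (fun t : ℝ => 2 / t ^ 2 * (h (x + t • u) - h x - t * fderiv ℝ h x u))
    (𝓝[>] (0 : ℝ)) (𝓝 D)

/-- The set `A(x,d)` for the constraints `g`. -/
def setA {s : ℕ} (m : ℕ) (g : Fin m → (Fin s → ℝ) → ℝ) (x d : Fin s → ℝ) :
    Set (Fin s → ℝ) :=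
  {z | ∀ i, g i x = 0 → fderiv ℝ (g i) x d = 0 →
    ∃ δ > 0, ∀ t ∈ Ioo (0 : ℝ) δ, g i (x + t • d + (t ^ 2 / 2) • z) ≤ 0}

/-- The set `B(x,d)` for the constraints `g`, with `gdd i = g_i''(x,d)`. -/
def setB {s : ℕ} (m : ℕ) (g : Fin m → (Fin s → ℝ) → ℝ) (x d : Fin s → ℝ)
    (gdd : Fin m → ℝ) : Set (Fin s → ℝ) :=
  {z | ∀ i, g i x = 0 → fderiv ℝ (g i) x d = 0 → fderiv ℝ (g i) x z + gdd i ≤ 0}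

lemma curve_hasDerivAt {s : ℕ} (x d z : Fin s → ℝ) :
    HasDerivAt (fun t : ℝ => x + t • d + (t ^ 2 / 2) • z) d 0 := by
  have h2 : HasDerivAt (fun t : ℝ => t • d) ((1:ℝ) • d) 0 := (hasDerivAt_id 0).smul_const d
  have h3 : HasDerivAt (fun t : ℝ => t ^ 2 / 2) ((2 * 0 ^ 1) / 2) 0 :=
    (hasDerivAt_pow 2 0).div_const 2
  have h4 := h3.smul_const z
  have := (h2.const_add x).add h4
  simp at this
  exact this

lemma curve_tendsto {s : ℕ} (x d z : Fin s → ℝ) :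
    Tendsto (fun t : ℝ => x + t • d + (t ^ 2 / 2) • z) (𝓝[>] 0) (𝓝 x) := by
  have h := (curve_hasDerivAt x d z).continuousAt.tendsto
  simp only [zero_smul, ne_eq, OfNat.ofNat_ne_zero, not_false_eq_true, zero_pow, zero_div,
    add_zero] at h
  exact h.mono_left nhdsWithin_le_nhds

lemma first_along_curve {s : ℕ} {h : (Fin s → ℝ) → ℝ} {x : Fin s → ℝ} (d z : Fin s → ℝ)
    (hC : DifferentiableAt ℝ h x) :
    Tendsto (fun t : ℝ => (h (x + t • d + (t ^ 2 / 2) • z) - h x) / t) (𝓝[>] 0)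
      (𝓝 (fderiv ℝ h x d)) := by
  have hc := curve_hasDerivAt x d z
  have hf : HasFDerivAt h (fderiv ℝ h x) ((fun t : ℝ => x + t • d + (t ^ 2 / 2) • z) 0) := by
    simpa using hC.hasFDerivAt
  have hcomp := hf.comp_hasDerivAt 0 hc
  have := hasDerivAt_iff_tendsto_slope.mp hcomp
  have h2 := this.mono_left (nhdsWithin_mono 0 (fun t ht => ne_of_gt ht))
  refine h2.congr (fun t => ?_)
  simp [slope_def_field, Function.comp, div_eq_inv_mul]

lemma second_along_curve {s : ℕ} {h : (Fin s → ℝ) → ℝ} {x d : Fin s → ℝ} {D : ℝ} (z : Fin s → ℝ)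
    (hC : ContDiffAt ℝ 1 h x) (hD : HasDirDeriv2 h x d D) :
    Tendsto (fun t : ℝ => 2 / t ^ 2 *
        (h (x + t • d + (t ^ 2 / 2) • z) - h x - t * fderiv ℝ h x d))
      (𝓝[>] 0) (𝓝 (D + fderiv ℝ h x z)) := by
  set f' := fderiv ℝ h x with hf'
  have hs : HasStrictFDerivAt h f' x := hC.hasStrictFDerivAt one_ne_zero
  have hlo := hs.isLittleO
  have hφ : Tendsto (fun t : ℝ => ((x + t • d + (t ^ 2 / 2) • z, x + t • d) :
      (Fin s → ℝ) × (Fin s → ℝ))) (𝓝[>] 0) (𝓝 (x, x)) := by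
    rw [nhds_prod_eq]; refine Tendsto.prodMk ?_ ?_
    · exact curve_tendsto x d z
    · have := curve_tendsto x d (0 : Fin s → ℝ)
      simpa using this
  have hlo2 := hlo.comp_tendsto hφ
  have hlo3 : (fun t : ℝ => h (x + t • d + (t ^ 2 / 2) • z) - h (x + t • d)
      - (t ^ 2 / 2) * f' z) =o[𝓝[>] 0] fun t : ℝ => t ^ 2 := by
    have heq : (fun t : ℝ => h (x + t • d + (t ^ 2 / 2) • z) - h (x + t • d)
        - (t ^ 2 / 2) * f' z) =ᶠ[𝓝[>] 0]
        ((fun p : (Fin s → ℝ) × (Fin s → ℝ) => h p.1 - h p.2 - f' (p.1 - p.2)) ∘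
          fun t : ℝ => (x + t • d + (t ^ 2 / 2) • z, x + t • d)) := by
      filter_upwards with t
      simp [Function.comp, add_sub_cancel_left, map_smul, smul_eq_mul]
    refine (hlo2.congr' heq.symm EventuallyEq.rfl).trans_isBigO ?_
    refine Asymptotics.IsBigO.of_bound (‖z‖ / 2) ?_
    filter_upwards with t
    simp only [Function.comp]
    rw [show (x + t • d + (t ^ 2 / 2) • z) - (x + t • d) = (t ^ 2 / 2) • z by abel]
    rw [norm_smul]
    simp [abs_div]
    have : t ^ 2 / 2 * ‖z‖ = ‖z‖ / 2 * t ^ 2 := by ring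
    linarith
  have h0 : Tendsto (fun t : ℝ => 2 * ((h (x + t • d + (t ^ 2 / 2) • z) - h (x + t • d)
      - (t ^ 2 / 2) * f' z) / t ^ 2)) (𝓝[>] 0) (𝓝 (2 * 0)) :=
    (hlo3.tendsto_div_nhds_zero).const_mul 2
  have hsum := (h0.add hD).add (tendsto_const_nhds (x := f' z) (f := 𝓝[>] (0:ℝ)))
  rw [mul_zero, zero_add] at hsum
  refine Tendsto.congr' ?_ hsum
  filter_upwards [self_mem_nhdsWithin] with t (ht : (0:ℝ) < t)
  have ht2 : t ^ 2 ≠ 0 := pow_ne_zero 2 (ne_of_gt ht)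
  field_simp
  ring

/-- if `x̄` is a weak local Pareto minimizer of (VP), `d` a nonzero critical
direction, Conditions (C) hold, the second-order Zangwill CQ `cl(A(x̄,d)) = B(x̄,d)` holds, and
the second-order directional derivatives `f_j''(x̄,d)`, `g_i''(x̄,d)` (`i ∈ I(x̄)`) exist, then
the system `∇f_j(x̄)u + v f_j''(x̄,d) < 0` for all `j`, `∇g_i(x̄)u + v g_i''(x̄,d) ≤ 0` for all
`i ∈ I(x̄)`, `v > 0`, has no solution. -/
theorem statement13 {s n m : ℕ} (X : Set (Fin s → ℝ)) (hX : IsOpen X)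
    (f : Fin n → (Fin s → ℝ) → ℝ) (g : Fin m → (Fin s → ℝ) → ℝ)
    (xbar d : Fin s → ℝ) (hxX : xbar ∈ X) (hfeas : ∀ i, g i xbar ≤ 0)
    -- weak local Pareto minimizer
    (hmin : ∃ U ∈ 𝓝 xbar, ∀ y ∈ U, y ∈ X → (∀ i, g i y ≤ 0) → ¬ ∀ j, f j y < f j xbar)
    -- d is a nonzero critical direction
    (hd : d ≠ 0)
    (hcritf : ∀ j, fderiv ℝ (f j) xbar d ≤ 0)
    (hcritg : ∀ i, g i xbar = 0 → fderiv ℝ (g i) xbar d ≤ 0)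
    -- Conditions (C)
    (hCont : ∀ i, g i xbar ≠ 0 → ContinuousAt (g i) xbar)
    (hfC1 : ∀ j, ContDiffOn ℝ 1 (f j) X)
    (hgC1 : ∀ i, g i xbar = 0 → ContDiffOn ℝ 1 (g i) X)
    -- existence of the second-order directional derivatives
    (fdd : Fin n → ℝ) (gdd : Fin m → ℝ)
    (hfdd : ∀ j, HasDirDeriv2 (f j) xbar d (fdd j))
    (hgdd : ∀ i, g i xbar = 0 → HasDirDeriv2 (g i) xbar d (gdd i))
    -- second-order Zangwill constraint qualification
    (hCQ : closure (setA m g xbar d) = setB m g xbar d gdd) :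
    ¬ ∃ (u : Fin s → ℝ) (v : ℝ), 0 < v ∧
        (∀ j, fderiv ℝ (f j) xbar u + v * fdd j < 0) ∧
        (∀ i, g i xbar = 0 → fderiv ℝ (g i) xbar u + v * gdd i ≤ 0) := by
  rintro ⟨u, v, hv, hfu, hgu⟩
  -- normalize: z = v⁻¹ • u
  set z : Fin s → ℝ := v⁻¹ • u with hzdef
  have hfz : ∀ j, fderiv ℝ (f j) xbar z + fdd j < 0 := by
    intro j
    have := hfu j
    rw [hzdef, map_smul, smul_eq_mul]
    have hveq : v⁻¹ * fderiv ℝ (f j) xbar u + fdd j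
        = v⁻¹ * (fderiv ℝ (f j) xbar u + v * fdd j) := by field_simp
    rw [hveq]
    exact mul_neg_of_pos_of_neg (inv_pos.mpr hv) this
  have hgz : ∀ i, g i xbar = 0 → fderiv ℝ (g i) xbar z + gdd i ≤ 0 := by
    intro i hi
    have := hgu i hi
    rw [hzdef, map_smul, smul_eq_mul]
    have hveq : v⁻¹ * fderiv ℝ (g i) xbar u + gdd i
        = v⁻¹ * (fderiv ℝ (g i) xbar u + v * gdd i) := by field_simp
    rw [hveq]
    exact mul_nonpos_of_nonneg_of_nonpos (le_of_lt (inv_pos.mpr hv)) this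
  -- z ∈ B = closure A
  have hzB : z ∈ setB m g xbar d gdd := fun i hi _ => hgz i hi
  have hzcl : z ∈ closure (setA m g xbar d) := by rw [hCQ]; exact hzB
  -- the open set W of z' with strict f-inequalities
  have hW : IsOpen {z' : Fin s → ℝ | ∀ j, fderiv ℝ (f j) xbar z' + fdd j < 0} := by
    have : {z' : Fin s → ℝ | ∀ j, fderiv ℝ (f j) xbar z' + fdd j < 0}
        = ⋂ j, (fun z' => fderiv ℝ (f j) xbar z' + fdd j) ⁻¹' Iio 0 := by
      ext z'; simp [Set.mem_iInter]
    rw [this]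
    exact isOpen_iInter_of_finite fun j =>
      isOpen_Iio.preimage ((fderiv ℝ (f j) xbar).continuous.add continuous_const)
  obtain ⟨z', hz'W, hz'A⟩ := mem_closure_iff.mp hzcl _ hW hfz
  -- the curve
  set c : ℝ → (Fin s → ℝ) := fun t => xbar + t • d + (t ^ 2 / 2) • z' with hcdef
  have hcten : Tendsto c (𝓝[>] 0) (𝓝 xbar) := curve_tendsto xbar d z'
  obtain ⟨U, hU, hUmin⟩ := hmin
  have E0 : ∀ᶠ t in 𝓝[>] (0:ℝ), c t ∈ U := hcten.eventually_mem hU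
  have E1 : ∀ᶠ t in 𝓝[>] (0:ℝ), c t ∈ X := hcten.eventually_mem (hX.mem_nhds hxX)
  have E2 : ∀ᶠ t in 𝓝[>] (0:ℝ), ∀ j, f j (c t) < f j xbar := by
    rw [eventually_all]
    intro j
    have hlim := second_along_curve z' ((hfC1 j).contDiffAt (hX.mem_nhds hxX)) (hfdd j)
    have hlt : fdd j + fderiv ℝ (f j) xbar z' < 0 := by
      have := hz'W j; linarith
    filter_upwards [hlim.eventually_lt_const hlt, self_mem_nhdsWithin] with t hF (ht : 0 < t)
    have ht2 : (0:ℝ) < t ^ 2 / 2 := by positivity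
    have hE : f j (c t) - f j xbar - t * fderiv ℝ (f j) xbar d < 0 := by
      have hprod := mul_neg_of_pos_of_neg ht2 hF
      have heq : t ^ 2 / 2 * (2 / t ^ 2 *
          (f j (c t) - f j xbar - t * fderiv ℝ (f j) xbar d))
          = f j (c t) - f j xbar - t * fderiv ℝ (f j) xbar d := by
        field_simp
      rwa [heq] at hprod
    have hle : t * fderiv ℝ (f j) xbar d ≤ 0 :=
      mul_nonpos_of_nonneg_of_nonpos (le_of_lt ht) (hcritf j)
    linarith
  have E3 : ∀ᶠ t in 𝓝[>] (0:ℝ), ∀ i, g i (c t) ≤ 0 := by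
    rw [eventually_all]
    intro i
    by_cases hi : g i xbar = 0
    · by_cases hgd : fderiv ℝ (g i) xbar d = 0
      · obtain ⟨δ, hδ, hgt⟩ := hz'A i hi hgd
        filter_upwards [Ioo_mem_nhdsGT_of_mem (by constructor <;> simp [hδ] : (0:ℝ) ∈ Ico 0 δ)]
          with t ht
        exact hgt t ht
      · have hlt : fderiv ℝ (g i) xbar d < 0 := lt_of_le_of_ne (hcritg i hi) hgd
        have hdiff : DifferentiableAt ℝ (g i) xbar :=
          ((hgC1 i hi).contDiffAt (hX.mem_nhds hxX)).differentiableAt one_ne_zero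
        have hlim := first_along_curve d z' hdiff
        filter_upwards [hlim.eventually_lt_const hlt, self_mem_nhdsWithin] with t hsl (ht : 0 < t)
        have h' := mul_neg_of_neg_of_pos hsl ht
        rw [div_mul_cancel₀ _ (ne_of_gt ht)] at h'
        rw [hi] at h'
        linarith
    · have hlt : g i xbar < 0 := lt_of_le_of_ne (hfeas i) hi
      have := (hCont i hi).tendsto.comp hcten
      filter_upwards [this.eventually_lt_const hlt] with t ht
      exact le_of_lt ht
  obtain ⟨t, h0, h1, h2, h3⟩ := (E0.and (E1.and (E2.and E3))).exists
  exact hUmin (c t) h0 h1 h3 h2
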